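/- arXiv:1910.10890 — 5 statements merged into one kernel-verified Lean document; each statement's English description precedes it below -/
import Mathlib

section
/- Let P and Q be independent random variables, each uniformly distributed on {1,2,...,m}. Then the probability that gcd(P,Q)=1 converges to 6/π² as m tends to infinity. -/
open Filter
open scoped ArithmeticFunction.Moebius

open ArithmeticFunction Finset in
/-- Möbius sum over divisors. -/
lemma aux_moebius_divisor_sum (n : ℕ) :
    ∑ d ∈ n.divisors, (μ d : ℤ) = if n = 1 then 1 else 0 := by
  have := congrArg (fun f : ArithmeticFunction ℤ => f n) moebius_mul_coe_zeta
  simpa only [coe_mul_zeta_apply, one_apply] using this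

open ArithmeticFunction Finset in
/-- Counting coprime pairs via Möbius inversion. -/
lemma aux_count_eq (m : ℕ) :
    (((Finset.Icc 1 m ×ˢ Finset.Icc 1 m).filter
        (fun pq : ℕ × ℕ => Nat.gcd pq.1 pq.2 = 1)).card : ℤ)
      = ∑ d ∈ Finset.Icc 1 m, (μ d : ℤ) * ((m / d : ℕ) : ℤ) ^ 2 := by
  have key : ∀ pq : ℕ × ℕ, pq ∈ Finset.Icc 1 m ×ˢ Finset.Icc 1 m →
      (if Nat.gcd pq.1 pq.2 = 1 then (1 : ℤ) else 0)
        = ∑ d ∈ Finset.Icc 1 m, (if d ∣ pq.1 ∧ d ∣ pq.2 then (μ d : ℤ) else 0) := by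
    rintro ⟨p, q⟩ hpq
    simp only [Finset.mem_product, Finset.mem_Icc] at hpq
    obtain ⟨⟨hp1, hpm⟩, ⟨hq1, _⟩⟩ := hpq
    rw [← aux_moebius_divisor_sum, ← Finset.sum_filter]
    congr 1
    ext d
    simp only [Nat.mem_divisors, Finset.mem_filter, Finset.mem_Icc, Nat.dvd_gcd_iff]
    constructor
    · rintro ⟨⟨hdp, hdq⟩, _⟩
      exact ⟨⟨Nat.pos_of_dvd_of_pos hdp hp1, le_trans (Nat.le_of_dvd hp1 hdp) hpm⟩, hdp, hdq⟩
    · rintro ⟨_, hdp, hdq⟩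
      refine ⟨⟨hdp, hdq⟩, ?_⟩
      intro hzero
      rw [Nat.gcd_eq_zero_iff] at hzero
      omega
  calc (((Finset.Icc 1 m ×ˢ Finset.Icc 1 m).filter
        (fun pq : ℕ × ℕ => Nat.gcd pq.1 pq.2 = 1)).card : ℤ)
      = ∑ pq ∈ Finset.Icc 1 m ×ˢ Finset.Icc 1 m,
          (if Nat.gcd pq.1 pq.2 = 1 then (1 : ℤ) else 0) := by
        rw [Finset.card_filter]
        push_cast [apply_ite (Int.ofNat)]
        rfl
    _ = ∑ pq ∈ Finset.Icc 1 m ×ˢ Finset.Icc 1 m, ∑ d ∈ Finset.Icc 1 m,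
          (if d ∣ pq.1 ∧ d ∣ pq.2 then (μ d : ℤ) else 0) := Finset.sum_congr rfl key
    _ = ∑ d ∈ Finset.Icc 1 m, ∑ pq ∈ Finset.Icc 1 m ×ˢ Finset.Icc 1 m,
          (if d ∣ pq.1 ∧ d ∣ pq.2 then (μ d : ℤ) else 0) := Finset.sum_comm
    _ = ∑ d ∈ Finset.Icc 1 m, (μ d : ℤ) * ((m / d : ℕ) : ℤ) ^ 2 := by
        refine Finset.sum_congr rfl fun d _ => ?_
        rw [← Finset.sum_filter, Finset.sum_const, nsmul_eq_mul]
        have hfp : (Finset.Icc 1 m ×ˢ Finset.Icc 1 m).filter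
            (fun pq : ℕ × ℕ => d ∣ pq.1 ∧ d ∣ pq.2)
            = (Finset.Icc 1 m).filter (d ∣ ·) ×ˢ (Finset.Icc 1 m).filter (d ∣ ·) :=
          Finset.filter_product _ _
        have hcard : ((Finset.Icc 1 m).filter (d ∣ ·)).card = m / d := by
          have : Finset.Icc 1 m = Finset.Ioc 0 m := rfl
          rw [this, Nat.Ioc_filter_dvd_card_eq_div]
        rw [hfp, Finset.card_product, hcard]
        push_cast
        ring

open ArithmeticFunction in
/-- The Möbius L-series value at 2, over the reals. -/
lemma aux_tsum_moebius : ∑' d : ℕ, ((μ d : ℝ) / (d : ℝ) ^ 2) = 6 / Real.pi ^ 2 := by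
  have h2 : (1 : ℝ) < (2 : ℂ).re := by norm_num
  have hmul := LSeries_zeta_mul_Lseries_moebius h2
  have hzeta := LSeries_zeta_eq_riemannZeta h2
  have hz2 : riemannZeta 2 = (Real.pi : ℂ) ^ 2 / 6 := riemannZeta_two
  have hpi : (Real.pi : ℂ) ^ 2 / 6 ≠ 0 := by
    simp [Real.pi_ne_zero]
  have hL : LSeries (fun n : ℕ => (μ n : ℂ)) 2 = 6 / (Real.pi : ℂ) ^ 2 := by
    have h1 : riemannZeta 2 * LSeries (fun n : ℕ => (μ n : ℂ)) 2 = 1 := by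
      rw [← hzeta]; exact hmul
    rw [hz2] at h1
    have hpi2 : ((Real.pi : ℂ)) ^ 2 ≠ 0 := pow_ne_zero 2 (by exact_mod_cast Real.pi_ne_zero)
    field_simp at h1
    rw [eq_div_iff hpi2]
    linear_combination h1
  have hterm : ∀ n : ℕ, LSeries.term (fun n : ℕ => (μ n : ℂ)) 2 n
      = (((μ n : ℝ) / (n : ℝ) ^ 2 : ℝ) : ℂ) := by
    intro n
    rcases eq_or_ne n 0 with rfl | hn
    · simp [LSeries.term_zero]
    · rw [LSeries.term_of_ne_zero hn]
      have : ((n : ℂ) ^ (2 : ℂ)) = (n : ℂ) ^ (2 : ℕ) := by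
        rw [show ((2 : ℂ)) = ((2 : ℕ) : ℂ) by norm_num, Complex.cpow_natCast]
      rw [this]
      push_cast
      ring
  have : LSeries (fun n : ℕ => (μ n : ℂ)) 2
      = ((∑' d : ℕ, ((μ d : ℝ) / (d : ℝ) ^ 2) : ℝ) : ℂ) := by
    rw [LSeries, Complex.ofReal_tsum]
    exact tsum_congr hterm
  rw [this] at hL
  have : ((6 : ℝ) / Real.pi ^ 2 : ℝ) = ((6 / (Real.pi : ℂ) ^ 2)) := by push_cast; ring
  exact_mod_cast hL.trans this.symm

open ArithmeticFunction in
/-- If P, Q are independent uniform on {1,...,m}, then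
P(gcd(P,Q)=1) → 6/π² as m → ∞. -/
theorem stmt0 :
    Tendsto (fun m : ℕ =>
      (((Finset.Icc 1 m ×ˢ Finset.Icc 1 m).filter
          (fun pq : ℕ × ℕ => Nat.gcd pq.1 pq.2 = 1)).card : ℝ) / (m : ℝ) ^ 2)
      atTop (nhds (6 / Real.pi ^ 2)) := by
  -- the dominated family
  set g : ℕ → ℕ → ℝ := fun m d =>
    if d ∈ Finset.Icc 1 m then (μ d : ℝ) * (((m / d : ℕ) : ℝ) / (m : ℝ)) ^ 2 else 0 with hg
  have hbound : ∀ m : ℕ, ∀ d : ℕ, ‖g m d‖ ≤ 1 / (d : ℝ) ^ 2 := by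
    intro m d
    by_cases hd : d ∈ Finset.Icc 1 m
    · simp only [hg, if_pos hd]
      simp only [Finset.mem_Icc] at hd
      obtain ⟨hd1, hdm⟩ := hd
      have hdpos : (0 : ℝ) < d := by exact_mod_cast hd1
      have hmpos : (0 : ℝ) < m := by
        have : (1 : ℕ) ≤ m := le_trans hd1 hdm
        exact_mod_cast this
      have hfrac : (0 : ℝ) ≤ ((m / d : ℕ) : ℝ) / (m : ℝ) := by positivity
      have hfrac2 : ((m / d : ℕ) : ℝ) / (m : ℝ) ≤ 1 / d := by
        rw [div_le_div_iff₀ hmpos hdpos]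
        have := Nat.div_mul_le_self m d
        calc ((m / d : ℕ) : ℝ) * d = ((m / d * d : ℕ) : ℝ) := by push_cast; ring
          _ ≤ (m : ℝ) := by exact_mod_cast this
          _ = 1 * m := (one_mul _).symm
      have hmu : |(μ d : ℝ)| ≤ 1 := by
        have := abs_moebius_le_one (n := d)
        exact_mod_cast this
      rw [Real.norm_eq_abs, abs_mul, abs_pow]
      calc |(μ d : ℝ)| * |((m / d : ℕ) : ℝ) / (m : ℝ)| ^ 2
          ≤ 1 * (1 / d) ^ 2 := by
            apply mul_le_mul hmu _ (by positivity) zero_le_one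
            apply pow_le_pow_left₀ (abs_nonneg _)
            rw [abs_of_nonneg hfrac]; exact hfrac2
        _ = 1 / (d : ℝ) ^ 2 := by rw [one_mul, div_pow, one_pow]
    · simp only [hg, if_neg hd, norm_zero]
      positivity
  have hsumbound : Summable (fun d : ℕ => 1 / (d : ℝ) ^ 2) :=
    Real.summable_one_div_nat_pow.mpr one_lt_two
  have hab : ∀ d : ℕ, Tendsto (fun m => g m d) atTop (nhds ((μ d : ℝ) / (d : ℝ) ^ 2)) := by
    intro d
    rcases eq_or_ne d 0 with rfl | hd0
    · have : ∀ m : ℕ, g m 0 = 0 := by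
        intro m; simp [hg, Finset.mem_Icc]
      simp only [this]
      simp [tendsto_const_nhds]
    · have hd1 : 1 ≤ d := Nat.one_le_iff_ne_zero.mpr hd0
      have hdpos : (0 : ℝ) < d := by exact_mod_cast hd1
      -- tendsto of the inner fraction
      have hfr : Tendsto (fun m : ℕ => ((m / d : ℕ) : ℝ) / (m : ℝ)) atTop
          (nhds (1 / d)) := by
        have hlow : Tendsto (fun m : ℕ => 1 / (d : ℝ) - 1 / (m : ℝ)) atTop
            (nhds (1 / d)) := by
          have := tendsto_one_div_atTop_nhds_zero_nat (𝕜 := ℝ)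
          simpa using (tendsto_const_nhds (x := 1 / (d : ℝ))).sub this
        refine tendsto_of_tendsto_of_tendsto_of_le_of_le' hlow tendsto_const_nhds ?_ ?_
        · filter_upwards [eventually_ge_atTop 1] with m hm
          have hmpos : (0 : ℝ) < m := by exact_mod_cast hm
          have hkey : (m : ℝ) < ((m / d : ℕ) : ℝ) * d + d := by
            have h1 : m = d * (m / d) + m % d := (Nat.div_add_mod m d).symm
            have h2 : m % d < d := Nat.mod_lt m (by omega)
            have h3 : (m : ℝ) = (d : ℝ) * ((m / d : ℕ) : ℝ) + ((m % d : ℕ) : ℝ) := by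
              exact_mod_cast congrArg (Nat.cast : ℕ → ℝ) h1
            have h4 : ((m % d : ℕ) : ℝ) < d := by exact_mod_cast h2
            rw [h3]; linarith
          have ha : (0 : ℝ) ≤ ((m / d : ℕ) : ℝ) := by positivity
          rw [div_sub_div _ _ (ne_of_gt hdpos) (ne_of_gt hmpos),
            div_le_div_iff₀ (by positivity) hmpos]
          nlinarith
        · filter_upwards [eventually_ge_atTop 1] with m hm
          have hmpos : (0 : ℝ) < m := by exact_mod_cast hm
          rw [div_le_div_iff₀ hmpos hdpos]
          have := Nat.div_mul_le_self m d
          calc ((m / d : ℕ) : ℝ) * d = ((m / d * d : ℕ) : ℝ) := by push_cast; ring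
            _ ≤ (m : ℝ) := by exact_mod_cast this
            _ = 1 * m := (one_mul _).symm
      have : Tendsto (fun m : ℕ => (μ d : ℝ) * (((m / d : ℕ) : ℝ) / (m : ℝ)) ^ 2) atTop
          (nhds ((μ d : ℝ) * (1 / d) ^ 2)) :=
        tendsto_const_nhds.mul (hfr.pow 2)
      have heq : (μ d : ℝ) * (1 / (d : ℝ)) ^ 2 = (μ d : ℝ) / (d : ℝ) ^ 2 := by
        rw [div_pow, one_pow, mul_one_div]
      rw [heq] at this
      refine this.congr' ?_
      filter_upwards [eventually_ge_atTop d] with m hm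
      rw [hg]
      simp only [Finset.mem_Icc]
      rw [if_pos ⟨hd1, hm⟩]
  have htsum : Tendsto (fun m => ∑' d, g m d) atTop
      (nhds (∑' d : ℕ, (μ d : ℝ) / (d : ℝ) ^ 2)) :=
    tendsto_tsum_of_dominated_convergence hsumbound hab (Eventually.of_forall hbound)
  rw [aux_tsum_moebius] at htsum
  refine htsum.congr' ?_
  filter_upwards [eventually_ge_atTop 1] with m hm
  have hmpos : (0 : ℝ) < m := by exact_mod_cast hm
  have hts : ∑' d, g m d = ∑ d ∈ Finset.Icc 1 m,
      (μ d : ℝ) * (((m / d : ℕ) : ℝ) / (m : ℝ)) ^ 2 := by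
    rw [tsum_eq_sum (s := Finset.Icc 1 m) (fun d hd => if_neg hd)]
    exact Finset.sum_congr rfl fun d hd => if_pos hd
  rw [hts]
  have hcount := aux_count_eq m
  have hcountR : (((Finset.Icc 1 m ×ˢ Finset.Icc 1 m).filter
        (fun pq : ℕ × ℕ => Nat.gcd pq.1 pq.2 = 1)).card : ℝ)
      = ∑ d ∈ Finset.Icc 1 m, (μ d : ℝ) * ((m / d : ℕ) : ℝ) ^ 2 := by
    rw [show (((Finset.Icc 1 m ×ˢ Finset.Icc 1 m).filter
          (fun pq : ℕ × ℕ => Nat.gcd pq.1 pq.2 = 1)).card : ℝ)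
        = ((((Finset.Icc 1 m ×ˢ Finset.Icc 1 m).filter
          (fun pq : ℕ × ℕ => Nat.gcd pq.1 pq.2 = 1)).card : ℤ) : ℝ) from by norm_cast,
      hcount, Int.cast_sum]
    exact Finset.sum_congr rfl fun d _ => by
      rw [Int.cast_mul, Int.cast_pow, Int.cast_natCast]
  rw [hcountR, Finset.sum_div]
  exact Finset.sum_congr rfl fun d _ => by
    rw [div_pow, mul_div_assoc]
end

section
/- Let q₁, q₂, q be positive integers with q → ∞ and max{q₁,q₂} = o(q²). Then the number of pairs (a,b) of integers with a ∈ [q₁, q₁+q], b ∈ [q₂, q₂+q] and gcd(a,b) = 1 equals q²(6/π² + o(1)) as q → ∞. -/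
open Filter Finset ArithmeticFunction
open scoped ArithmeticFunction.Moebius

lemma moebius_sum_div (n : ℕ) : ∑ d ∈ n.divisors, μ d = if n = 1 then 1 else 0 := by
  have h := congrArg (fun f : ArithmeticFunction ℤ => f n)
    (coe_moebius_mul_coe_zeta (R := ℤ))
  simp only [coe_mul_zeta_apply, one_apply, intCoe_apply] at h
  exact h

lemma moebius_count (x y q : ℕ) (hx : 0 < x) (hy : 0 < y) :
    (((Finset.Icc x (x+q) ×ˢ Finset.Icc y (y+q)).filter
        (fun ab : ℕ × ℕ => Nat.gcd ab.1 ab.2 = 1)).card : ℤ) =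
    ∑ d ∈ Finset.Icc 1 (min x y + q),
      (μ d) * (((Finset.Icc x (x+q)).filter (d ∣ ·)).card : ℤ)
        * (((Finset.Icc y (y+q)).filter (d ∣ ·)).card : ℤ) := by
  set P := Finset.Icc x (x+q) ×ˢ Finset.Icc y (y+q) with hP
  set N := min x y + q with hN
  rw [Finset.card_filter]
  push_cast
  have key : ∀ p ∈ P, (if Nat.gcd p.1 p.2 = 1 then (1:ℤ) else 0)
      = ∑ d ∈ Finset.Icc 1 N, if d ∣ p.1 ∧ d ∣ p.2 then μ d else 0 := by
    rintro ⟨a, b⟩ hp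
    simp only [hP, Finset.mem_product, Finset.mem_Icc] at hp
    have ha : 0 < a := lt_of_lt_of_le hx hp.1.1
    have hb : 0 < b := lt_of_lt_of_le hy hp.2.1
    rw [← Finset.sum_filter]
    have hset : (Finset.Icc 1 N).filter (fun d => d ∣ a ∧ d ∣ b) = (Nat.gcd a b).divisors := by
      ext d
      simp only [Finset.mem_filter, Finset.mem_Icc, Nat.mem_divisors, Nat.dvd_gcd_iff]
      constructor
      · rintro ⟨_, hda, hdb⟩; exact ⟨⟨hda, hdb⟩, Nat.gcd_ne_zero_left ha.ne'⟩
      · rintro ⟨⟨hda, hdb⟩, -⟩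
        refine ⟨⟨Nat.one_le_iff_ne_zero.2 ?_, ?_⟩, hda, hdb⟩
        · rintro rfl; simp at hda; omega
        · have h1 : d ≤ a := Nat.le_of_dvd ha hda
          have h2 : d ≤ b := Nat.le_of_dvd hb hdb
          omega
    rw [hset, moebius_sum_div]
  rw [Finset.sum_congr rfl key, Finset.sum_comm]
  apply Finset.sum_congr rfl
  intro d _
  rw [← Finset.sum_filter]
  have : P.filter (fun p : ℕ × ℕ => d ∣ p.1 ∧ d ∣ p.2)
      = (Finset.Icc x (x+q)).filter (d ∣ ·) ×ˢ (Finset.Icc y (y+q)).filter (d ∣ ·) := by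
    rw [hP, Finset.filter_product]
  rw [this, Finset.sum_const, Finset.card_product]
  push_cast
  ring

lemma count_card_eq (x q d : ℕ) (hx : 0 < x) :
    ((Finset.Icc x (x+q)).filter (d ∣ ·)).card = (x+q)/d - (x-1)/d := by
  have h1 : Finset.Icc x (x+q) = Finset.Ioc (x-1) (x+q) := by
    ext a; simp [Nat.lt_iff_add_one_le, Nat.sub_add_cancel hx]
  have hsub : (Finset.Ioc 0 (x-1)).filter (d ∣ ·) ⊆ (Finset.Ioc 0 (x+q)).filter (d ∣ ·) := by
    apply Finset.filter_subset_filter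
    apply Finset.Ioc_subset_Ioc le_rfl
    omega
  have h2 : (Finset.Ioc (x-1) (x+q)).filter (d ∣ ·)
      = (Finset.Ioc 0 (x+q)).filter (d ∣ ·) \ (Finset.Ioc 0 (x-1)).filter (d ∣ ·) := by
    ext a
    simp only [Finset.mem_sdiff, Finset.mem_Ioc, Finset.mem_filter]
    constructor
    · rintro ⟨⟨h1,h2⟩,h3⟩; exact ⟨⟨by omega, h3⟩, by intro h; exact absurd h.1.2 (by omega)⟩
    · rintro ⟨⟨⟨h1,h2⟩,h3⟩,h4⟩
      refine ⟨⟨?_, h2⟩, h3⟩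
      by_contra h
      exact h4 ⟨⟨h1, by omega⟩, h3⟩
  rw [h1, h2, Finset.card_sdiff_of_subset hsub, Nat.Ioc_filter_dvd_card_eq_div,
    Nat.Ioc_filter_dvd_card_eq_div]

lemma count_near (x q d : ℕ) (hx : 0 < x) (hd : 0 < d) :
    |(((Finset.Icc x (x+q)).filter (d ∣ ·)).card : ℝ) - (q:ℝ)/d| ≤ 2 := by
  rw [count_card_eq x q d hx]
  have hle : (x-1)/d ≤ (x+q)/d := Nat.div_le_div_right (by omega)
  rw [Nat.cast_sub hle]
  have hd' : (0:ℝ) < d := by exact_mod_cast hd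
  have cast_le : ∀ m : ℕ, ((m/d : ℕ):ℝ) ≤ (m:ℝ)/d := fun m => Nat.cast_div_le
  have cast_gt : ∀ m : ℕ, (m:ℝ)/d - 1 < ((m/d:ℕ):ℝ) := by
    intro m
    rw [sub_lt_iff_lt_add, div_lt_iff₀ hd']
    have h0 : d * (m/d) + m % d = m := Nat.div_add_mod m d
    have h1 : m % d < d := Nat.mod_lt m hd
    have : (m:ℝ) = (d:ℝ) * ((m/d:ℕ):ℝ) + ((m % d : ℕ):ℝ) := by exact_mod_cast h0.symm
    rw [this]
    have : ((m % d : ℕ):ℝ) < (d:ℝ) := by exact_mod_cast h1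
    nlinarith
  have h1 := cast_le (x+q)
  have h2 := cast_gt (x+q)
  have h3 := cast_le (x-1)
  have h4 := cast_gt (x-1)
  have hxc : ((x-1:ℕ):ℝ) = (x:ℝ) - 1 := by
    have h : (1:ℕ) ≤ x := hx
    push_cast [h]
    ring
  rw [hxc] at h3 h4
  have hd1 : (1:ℝ) ≤ d := by exact_mod_cast hd
  have e3 : 1/(d:ℝ) ≤ 1 := by rw [div_le_one hd']; exact hd1
  have e2 : (0:ℝ) < 1/d := by positivity
  have e1 : ((x:ℝ)+(q:ℝ))/d - ((x:ℝ)-1)/d = (q:ℝ)/d + 1/d := by ring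
  push_cast at h1 h2
  rw [abs_le]
  constructor <;> linarith

lemma term_bound (x y q d : ℕ) (hx : 0 < x) (hy : 0 < y) (hq : 0 < q) (hd : 0 < d) :
    |(μ d : ℝ) * (((Finset.Icc x (x+q)).filter (d ∣ ·)).card : ℝ)
        * (((Finset.Icc y (y+q)).filter (d ∣ ·)).card : ℝ) / (q:ℝ)^2 - (μ d : ℝ)/(d:ℝ)^2|
      ≤ 4/((q:ℝ)*d) + 4/(q:ℝ)^2 := by
  set A := ((((Finset.Icc x (x+q)).filter (d ∣ ·)).card : ℕ) : ℝ) with hAdef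
  set B := ((((Finset.Icc y (y+q)).filter (d ∣ ·)).card : ℕ) : ℝ) with hBdef
  have hA := count_near x q d hx hd
  have hB := count_near y q d hy hd
  have hA0 : (0:ℝ) ≤ A := Nat.cast_nonneg _
  have hc0 : (0:ℝ) ≤ (q:ℝ)/d := by positivity
  have hq' : (0:ℝ) < (q:ℝ) := by exact_mod_cast hq
  have hd' : (0:ℝ) < (d:ℝ) := by exact_mod_cast hd
  have key : |A*B - ((q:ℝ)/d)^2| ≤ 4*((q:ℝ)/d) + 4 := by
    rw [abs_le] at hA hB ⊢
    constructor <;> nlinarith [hA.1, hA.2, hB.1, hB.2]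
  have e : (μ d:ℝ) * A * B/(q:ℝ)^2 - (μ d:ℝ)/(d:ℝ)^2
      = (μ d:ℝ) * ((A*B - ((q:ℝ)/d)^2)/(q:ℝ)^2) := by
    field_simp
  rw [e, abs_mul, abs_div, _root_.abs_of_nonneg (by positivity : (0:ℝ) ≤ (q:ℝ)^2)]
  have hm : |(μ d:ℝ)| ≤ 1 := by exact_mod_cast (abs_moebius_le_one (n := d))
  have h2 : |A*B - ((q:ℝ)/d)^2|/(q:ℝ)^2 ≤ (4*((q:ℝ)/d) + 4)/(q:ℝ)^2 := by gcongr
  calc |(μ d:ℝ)| * (|A*B - ((q:ℝ)/d)^2|/(q:ℝ)^2)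
      ≤ 1 * ((4*((q:ℝ)/d) + 4)/(q:ℝ)^2) := by
        apply mul_le_mul hm h2 (by positivity) zero_le_one
    _ = 4/((q:ℝ)*d) + 4/(q:ℝ)^2 := by
        field_simp

lemma harmonic_sqrt (N : ℕ) : ∑ d ∈ Finset.Icc 1 N, (1:ℝ)/d ≤ 2 * Real.sqrt N := by
  induction N with
  | zero => simp
  | succ n ih =>
    have h1 : Finset.Icc 1 (n+1) = insert (n+1) (Finset.Icc 1 n) := by
      ext a; simp; omega
    rw [h1, Finset.sum_insert (by simp)]
    have hs : Real.sqrt (n+1) ^ 2 = (n:ℝ)+1 := Real.sq_sqrt (by positivity)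
    have ht : Real.sqrt n ^ 2 = (n:ℝ) := Real.sq_sqrt (by positivity)
    have hst : Real.sqrt n ≤ Real.sqrt (n+1) := Real.sqrt_le_sqrt (by push_cast; linarith)
    have hs1 : (1:ℝ) ≤ Real.sqrt (n+1) := by
      nlinarith [Real.sqrt_nonneg ((n:ℝ)+1), hs]
    have key : (1:ℝ)/((n:ℝ)+1) ≤ 2 * (Real.sqrt (n+1) - Real.sqrt n) := by
      rw [div_le_iff₀ (by positivity)]
      nlinarith [Real.sqrt_nonneg n, Real.sqrt_nonneg (n+1)]
    push_cast
    push_cast at ih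
    linarith

lemma main_est (x y q : ℕ) (hx : 0 < x) (hy : 0 < y) (hq : 0 < q) :
    |(((Finset.Icc x (x+q) ×ˢ Finset.Icc y (y+q)).filter
        (fun ab : ℕ × ℕ => Nat.gcd ab.1 ab.2 = 1)).card : ℝ) / (q:ℝ)^2
      - ∑ d ∈ Finset.Icc 1 (min x y + q), (μ d : ℝ)/(d:ℝ)^2|
    ≤ 8 * Real.sqrt ((min x y + q : ℕ) : ℝ) / q + 4 * ((min x y + q : ℕ):ℝ) / (q:ℝ)^2 := by
  set N := min x y + q with hN
  have hcard : (((Finset.Icc x (x+q) ×ˢ Finset.Icc y (y+q)).filter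
      (fun ab : ℕ × ℕ => Nat.gcd ab.1 ab.2 = 1)).card : ℝ)
      = ∑ d ∈ Finset.Icc 1 N, (μ d : ℝ) * (((Finset.Icc x (x+q)).filter (d ∣ ·)).card : ℝ)
        * (((Finset.Icc y (y+q)).filter (d ∣ ·)).card : ℝ) := by
    exact_mod_cast moebius_count x y q hx hy
  rw [hcard, Finset.sum_div, ← Finset.sum_sub_distrib]
  refine (Finset.abs_sum_le_sum_abs _ _).trans ?_
  have step : ∀ d ∈ Finset.Icc 1 N,
      |(μ d : ℝ) * (((Finset.Icc x (x+q)).filter (d ∣ ·)).card : ℝ)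
        * (((Finset.Icc y (y+q)).filter (d ∣ ·)).card : ℝ) / (q:ℝ)^2 - (μ d : ℝ)/(d:ℝ)^2|
      ≤ 4/((q:ℝ)*d) + 4/(q:ℝ)^2 := by
    intro d hdmem
    simp only [Finset.mem_Icc] at hdmem
    exact term_bound x y q d hx hy hq hdmem.1
  refine (Finset.sum_le_sum step).trans ?_
  rw [Finset.sum_add_distrib, Finset.sum_const, Nat.card_Icc]
  have hsplit : ∑ d ∈ Finset.Icc 1 N, (4:ℝ)/((q:ℝ)*d)
      = (4/(q:ℝ)) * ∑ d ∈ Finset.Icc 1 N, 1/(d:ℝ) := by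
    rw [Finset.mul_sum]
    apply Finset.sum_congr rfl
    intro d _
    ring
  rw [hsplit]
  have hq' : (0:ℝ) < (q:ℝ) := by exact_mod_cast hq
  have hh := harmonic_sqrt N
  have h1 : (4/(q:ℝ)) * ∑ d ∈ Finset.Icc 1 N, 1/(d:ℝ)
      ≤ (4/(q:ℝ)) * (2 * Real.sqrt N) := by
    apply mul_le_mul_of_nonneg_left hh (by positivity)
  have h2 : (N + 1 - 1) • ((4:ℝ)/(q:ℝ)^2) = 4 * (N:ℝ)/(q:ℝ)^2 := by
    rw [Nat.add_sub_cancel, nsmul_eq_mul]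
    ring
  rw [h2]
  have : (4/(q:ℝ)) * (2 * Real.sqrt N) = 8 * Real.sqrt N / q := by ring
  linarith [h1]

lemma summable_t : Summable (fun d : ℕ => (μ d : ℝ)/(d:ℝ)^2) := by
  have hg : Summable (fun d : ℕ => 1/(d:ℝ)^2) := Real.summable_one_div_nat_pow.mpr one_lt_two
  have hle : ∀ d : ℕ, |(μ d : ℝ)/(d:ℝ)^2| ≤ 1/(d:ℝ)^2 := by
    intro d
    rcases Nat.eq_zero_or_pos d with rfl | hd
    · simp
    · rw [abs_div, _root_.abs_of_nonneg (by positivity : (0:ℝ) ≤ (d:ℝ)^2)]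
      gcongr
      exact_mod_cast (abs_moebius_le_one (n := d))
  exact Summable.of_abs (Summable.of_nonneg_of_le (fun d => abs_nonneg _) hle hg)

lemma tsum_moebius_val : ∑' d : ℕ, (μ d : ℝ)/(d:ℝ)^2 = 6/Real.pi^2 := by
  have hs : (1:ℝ) < (2:ℂ).re := by norm_num
  have hz := LSeries_zeta_mul_Lseries_moebius (s := 2) hs
  rw [LSeries_zeta_eq_riemannZeta hs, riemannZeta_two] at hz
  have hpi : ((Real.pi:ℂ))^2 ≠ 0 := by
    simpa using Complex.ofReal_ne_zero.mpr Real.pi_ne_zero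
  have hL : LSeries (fun n => (μ n : ℂ)) 2 = 6/(Real.pi:ℂ)^2 := by
    field_simp at hz
    rw [eq_div_iff hpi]
    linear_combination hz
  have hterm : ∀ n : ℕ, LSeries.term (fun n => (μ n : ℂ)) 2 n
      = (((μ n : ℝ) : ℂ))/((n:ℂ))^2 := by
    intro n
    rcases eq_or_ne n 0 with rfl | hn
    · simp [LSeries.term]
    · rw [LSeries.term_of_ne_zero hn]
      rw [show ((2:ℂ)) = ((2:ℕ):ℂ) by norm_num, Complex.cpow_natCast]
      norm_num
  have hco : ((∑' d : ℕ, (μ d : ℝ)/(d:ℝ)^2 : ℝ) : ℂ) = ∑' d : ℕ, (((μ d : ℝ):ℂ))/((d:ℂ))^2 := by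
    rw [Complex.ofReal_tsum]
    push_cast
    rfl
  have : ((∑' d : ℕ, (μ d : ℝ)/(d:ℝ)^2 : ℝ) : ℂ) = ((6/Real.pi^2 : ℝ) : ℂ) := by
    rw [hco, show ((6/Real.pi^2 : ℝ):ℂ) = 6/(Real.pi:ℂ)^2 by push_cast; ring, ← hL, LSeries]
    exact (tsum_congr hterm).symm
  exact_mod_cast this

/-- For shifts q₁(q), q₂(q) with max{q₁,q₂} = o(q²), the number of coprime pairs
in [q₁,q₁+q] × [q₂,q₂+q] equals q²(6/π² + o(1)). -/
theorem stmt1 (q₁ q₂ : ℕ → ℕ) (hpos₁ : ∀ q, 0 < q₁ q) (hpos₂ : ∀ q, 0 < q₂ q)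
    (ho : (fun q : ℕ => (max (q₁ q) (q₂ q) : ℝ)) =o[atTop] fun q : ℕ => (q : ℝ) ^ 2) :
    Tendsto (fun q : ℕ =>
      (((Finset.Icc (q₁ q) (q₁ q + q) ×ˢ Finset.Icc (q₂ q) (q₂ q + q)).filter
          (fun ab : ℕ × ℕ => Nat.gcd ab.1 ab.2 = 1)).card : ℝ) / (q : ℝ) ^ 2)
      atTop (nhds (6 / Real.pi ^ 2)) := by
  set t : ℕ → ℝ := fun d => (μ d : ℝ)/(d:ℝ)^2 with ht
  set N : ℕ → ℕ := fun q => min (q₁ q) (q₂ q) + q with hNdef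
  set f : ℕ → ℝ := fun q =>
      (((Finset.Icc (q₁ q) (q₁ q + q) ×ˢ Finset.Icc (q₂ q) (q₂ q + q)).filter
          (fun ab : ℕ × ℕ => Nat.gcd ab.1 ab.2 = 1)).card : ℝ) / (q : ℝ) ^ 2 with hf
  set Pf : ℕ → ℝ := fun q => ∑ d ∈ Finset.range (N q + 1), t d with hPf
  have hpartial : Tendsto (fun n => ∑ d ∈ Finset.range n, t d) atTop (nhds (6/Real.pi^2)) := by
    rw [← tsum_moebius_val]
    exact summable_t.hasSum.tendsto_sum_nat
  have hNtop : Tendsto (fun q => N q + 1) atTop atTop :=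
    tendsto_atTop_mono (fun q => le_trans (Nat.le_add_left q _) (Nat.le_succ _)) tendsto_id
  have hP : Tendsto Pf atTop (nhds (6/Real.pi^2)) := hpartial.comp hNtop
  have hrange : ∀ q, Pf q = ∑ d ∈ Finset.Icc 1 (N q), t d := by
    intro q
    have h0 : Finset.range (N q + 1) = insert 0 (Finset.Icc 1 (N q)) := by
      ext a; simp; omega
    rw [hPf]
    simp only [h0]
    rw [Finset.sum_insert (by simp)]
    have ht0 : t 0 = 0 := by simp [ht]
    rw [ht0, zero_add]
  -- N q / q² → 0
  have hmax : Tendsto (fun q : ℕ => (max (q₁ q) (q₂ q) : ℝ)/(q:ℝ)^2) atTop (nhds 0) :=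
    ho.tendsto_div_nhds_zero
  have hinv : Tendsto (fun q : ℕ => ((q:ℝ))/(q:ℝ)^2) atTop (nhds 0) := by
    have hcong : ∀ᶠ q : ℕ in atTop, 1/(q:ℝ) = (q:ℝ)/(q:ℝ)^2 := by
      filter_upwards [eventually_gt_atTop 0] with q hq
      have hq' : (q:ℝ) ≠ 0 := by positivity
      field_simp
    exact Tendsto.congr' hcong tendsto_one_div_atTop_nhds_zero_nat
  have hN0 : Tendsto (fun q : ℕ => ((N q : ℕ):ℝ)/(q:ℝ)^2) atTop (nhds 0) := by
    have hub : ∀ᶠ q : ℕ in atTop, ((N q : ℕ):ℝ)/(q:ℝ)^2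
        ≤ (max (q₁ q) (q₂ q) : ℝ)/(q:ℝ)^2 + (q:ℝ)/(q:ℝ)^2 := by
      filter_upwards [eventually_gt_atTop 0] with q hq
      have hq2 : (0:ℝ) < (q:ℝ)^2 := by positivity
      rw [← add_div, div_le_div_iff_of_pos_right hq2]
      have : N q ≤ max (q₁ q) (q₂ q) + q := Nat.add_le_add_right (min_le_max) q
      have h' : ((N q : ℕ):ℝ) ≤ ((max (q₁ q) (q₂ q) + q : ℕ):ℝ) := by exact_mod_cast this
      push_cast at h' ⊢
      linarith
    have hlb : ∀ᶠ q : ℕ in atTop, (0:ℝ) ≤ ((N q : ℕ):ℝ)/(q:ℝ)^2 := by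
      filter_upwards with q
      positivity
    have hsum0 : Tendsto (fun q : ℕ => (max (q₁ q) (q₂ q) : ℝ)/(q:ℝ)^2 + (q:ℝ)/(q:ℝ)^2)
        atTop (nhds 0) := by
      simpa using hmax.add hinv
    exact squeeze_zero' hlb hub hsum0
  -- bound function
  set B : ℕ → ℝ := fun q => 8 * Real.sqrt (((N q : ℕ):ℝ)/(q:ℝ)^2) + 4 * (((N q : ℕ):ℝ)/(q:ℝ)^2)
    with hB
  have hsqrt : Tendsto (fun q : ℕ => Real.sqrt (((N q : ℕ):ℝ)/(q:ℝ)^2)) atTop (nhds 0) := by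
    have := hN0.sqrt
    simpa using this
  have hB0 : Tendsto B atTop (nhds 0) := by
    have h := (hsqrt.const_mul (8:ℝ)).add (hN0.const_mul (4:ℝ))
    have h0 : (8:ℝ)*0 + 4*0 = 0 := by norm_num
    rw [hB, ← h0]
    exact h
  -- the eventual estimate
  have hEst : ∀ᶠ q : ℕ in atTop, ‖f q - Pf q‖ ≤ B q := by
    filter_upwards [eventually_gt_atTop 0] with q hq
    rw [hrange q, Real.norm_eq_abs]
    have hme := main_est (q₁ q) (q₂ q) q (hpos₁ q) (hpos₂ q) hq
    have hq' : (0:ℝ) < (q:ℝ) := by exact_mod_cast hq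
    have heq : 8 * Real.sqrt ((N q : ℕ):ℝ) / q + 4 * ((N q : ℕ):ℝ)/(q:ℝ)^2 = B q := by
      simp only [hB]
      have h1 : Real.sqrt (((N q : ℕ):ℝ)/(q:ℝ)^2)
          = Real.sqrt ((N q : ℕ):ℝ) / (q:ℝ) := by
        rw [Real.sqrt_div (Nat.cast_nonneg _), Real.sqrt_sq hq'.le]
      rw [h1]
      ring
    rw [← heq]
    exact hme
  have hdiff : Tendsto (fun q => f q - Pf q) atTop (nhds 0) :=
    squeeze_zero_norm' hEst hB0
  have hfinal := hP.add hdiff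
  rw [add_zero] at hfinal
  have : (fun q => Pf q + (f q - Pf q)) = f := by
    funext q
    ring
  rw [this] at hfinal
  exact hfinal
end

section
/- Let X = (X₁,...,X_p) be a jointly continuous random vector in ℝᵖ (i.e., its law has a density with respect to Lebesgue measure), and let a₁,...,a_R be rationally independent real numbers. Then with probability 1, the set {Xᵢ·aⱼ : 1 ≤ i ≤ p, 1 ≤ j ≤ R} of pR real numbers is rationally independent. -/
open MeasureTheory

/-- If X is a jointly continuous random vector in ℝᵖ and a₁,...,a_R are
rationally independent reals, then almost surely the pR numbers Xᵢ·aⱼ are rationally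
independent. -/
theorem stmt5 {Ω : Type*} [MeasurableSpace Ω] (μ : Measure Ω) [IsProbabilityMeasure μ]
    (p R : ℕ) (X : Ω → (Fin p → ℝ)) (hX : Measurable X)
    (f : (Fin p → ℝ) → ENNReal) (hf : Measurable f)
    (hdens : μ.map X = (volume : Measure (Fin p → ℝ)).withDensity f)
    (a : Fin R → ℝ)
    (ha : ∀ q : Fin R → ℚ, ∑ j, (q j : ℝ) * a j = 0 → ∀ j, q j = 0) :
    ∀ᵐ ω ∂μ, ∀ q : Fin p → Fin R → ℚ,
      (∑ i, ∑ j, (q i j : ℝ) * (X ω i * a j)) = 0 → ∀ i j, q i j = 0 := by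
  rw [ae_all_iff]
  intro q
  by_cases hq : ∀ i j, q i j = 0
  · exact Filter.Eventually.of_forall fun ω _ => hq
  push_neg at hq
  obtain ⟨i₀, j₀, hq0⟩ := hq
  have hci : (∑ j, (q i₀ j : ℝ) * a j) ≠ 0 := fun h => hq0 (ha (q i₀) h j₀)
  set L : (Fin p → ℝ) →ₗ[ℝ] ℝ :=
    { toFun := fun x => ∑ i, x i * (∑ j, (q i j : ℝ) * a j),
      map_add' := by intro x y; simp [add_mul, Finset.sum_add_distrib],
      map_smul' := by
        intro r x
        simp [Finset.mul_sum, mul_assoc] } with hL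
  have hLtop : LinearMap.ker L ≠ ⊤ := by
    intro h
    have h1 : L (Pi.single i₀ 1) = 0 := by
      rw [← LinearMap.mem_ker, h]; trivial
    simp only [hL, LinearMap.coe_mk, AddHom.coe_mk, Pi.single_apply] at h1
    rw [Finset.sum_eq_single i₀ (by intro b _ hb; simp [hb]) (by simp)] at h1
    simp at h1
    exact hci h1
  have hclosed : IsClosed (LinearMap.ker L : Set (Fin p → ℝ)) :=
    Submodule.closed_of_finiteDimensional _
  have hS : MeasurableSet (LinearMap.ker L : Set (Fin p → ℝ)) := hclosed.measurableSet
  have hvol : volume (LinearMap.ker L : Set (Fin p → ℝ)) = 0 :=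
    Measure.addHaar_submodule _ _ hLtop
  have key : μ (X ⁻¹' (LinearMap.ker L : Set (Fin p → ℝ))) = 0 := by
    rw [← Measure.map_apply hX hS, hdens, withDensity_apply _ hS,
      setLIntegral_measure_zero _ _ hvol]
  have hae : ∀ᵐ ω ∂μ, X ω ∉ (LinearMap.ker L : Set (Fin p → ℝ)) := by
    rw [ae_iff]
    simp only [not_not]; exact key
  filter_upwards [hae] with ω hω hsum
  exfalso
  apply hω
  simp only [SetLike.mem_coe, LinearMap.mem_ker, hL, LinearMap.coe_mk, AddHom.coe_mk]
  rw [← hsum]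
  exact Finset.sum_congr rfl fun i _ => by
    rw [Finset.mul_sum]
    exact Finset.sum_congr rfl fun j _ => by ring
end

section
/- Let p₁,...,p_n be distinct square-free positive integers (each greater than 1). Then the real numbers √p₁, ..., √p_n are linearly independent over the rationals. -/
open Real Finset

/-- The field generated by square roots of elements of `S`. -/
noncomputable def KS (S : Finset ℕ) : Subfield ℝ :=
  Subfield.closure ((fun p : ℕ => Real.sqrt p) '' ↑S)

lemma sqrt_finset_prod (s : Finset ℕ) :
    Real.sqrt (∏ r ∈ s, (r : ℝ)) = ∏ r ∈ s, Real.sqrt r := by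
  classical
  induction s using Finset.induction_on with
  | empty => simp
  | insert a s hx ih =>
    rw [Finset.prod_insert hx, Finset.prod_insert hx, Real.sqrt_mul (by positivity), ih]

lemma sqrt_mem_KS {S : Finset ℕ} {d : ℕ} (hd : Squarefree d)
    (hfac : ∀ r : ℕ, r.Prime → r ∣ d → r ∈ S) : Real.sqrt d ∈ KS S := by
  have hprod : (∏ r ∈ d.primeFactors, r) = d := Nat.prod_primeFactors_of_squarefree hd
  have hcast : (d : ℝ) = ∏ r ∈ d.primeFactors, (r : ℝ) := by
    rw [← Nat.cast_prod, hprod]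
  rw [hcast, sqrt_finset_prod]
  refine prod_mem ?_
  intro r hr
  have hr' := Nat.prime_of_mem_primeFactors hr
  have hrS : r ∈ S := hfac r hr' (Nat.dvd_of_mem_primeFactors hr)
  exact Subfield.subset_closure ⟨r, by simpa using hrS, rfl⟩

/-- Representation of elements of `K(α)` when `α² ∈ K` and `α ∉ K`. -/
lemma rep_adjoin (K : Subfield ℝ) (α : ℝ) (h2 : α * α ∈ K) (hα : α ∉ K) {x : ℝ}
    (hx : x ∈ Subfield.closure (insert α (K : Set ℝ))) :
    ∃ a ∈ K, ∃ b ∈ K, x = a + b * α := by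
  induction hx using Subfield.closure_induction with
  | mem z hz =>
    rcases hz with rfl | hz
    · exact ⟨0, zero_mem K, 1, one_mem K, by ring⟩
    · exact ⟨z, hz, 0, zero_mem K, by ring⟩
  | one => exact ⟨1, one_mem K, 0, zero_mem K, by ring⟩
  | add x y hx hy ihx ihy =>
    obtain ⟨a, ha, b, hb, rfl⟩ := ihx
    obtain ⟨c, hc, d, hd, rfl⟩ := ihy
    exact ⟨a + c, add_mem ha hc, b + d, add_mem hb hd, by ring⟩
  | neg x hx ihx =>
    obtain ⟨a, ha, b, hb, rfl⟩ := ihx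
    exact ⟨-a, neg_mem ha, -b, neg_mem hb, by ring⟩
  | mul x y hx hy ihx ihy =>
    obtain ⟨a, ha, b, hb, rfl⟩ := ihx
    obtain ⟨c, hc, d, hd, rfl⟩ := ihy
    exact ⟨a * c + b * d * (α * α), add_mem (mul_mem ha hc) (mul_mem (mul_mem hb hd) h2),
      a * d + b * c, add_mem (mul_mem ha hd) (mul_mem hb hc), by ring⟩
  | inv x hx ihx =>
    obtain ⟨a, ha, b, hb, rfl⟩ := ihx
    by_cases hz : a + b * α = 0
    · exact ⟨0, zero_mem K, 0, zero_mem K, by rw [hz]; simp⟩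
    · have hD : a * a - b * b * (α * α) ≠ 0 := by
        intro hD0
        have hfac : (a - b * α) * (a + b * α) = 0 := by linear_combination hD0
        rcases mul_eq_zero.mp hfac with h1 | h1
        · by_cases hb0 : b = 0
          · exact hz (by rw [show a = b * α by linarith, hb0]; ring)
          · refine hα ?_
            have hαeq : α = a * b⁻¹ := by field_simp; linarith
            rw [hαeq]; exact mul_mem ha (inv_mem hb)
        · exact hz h1
      have hDm : a * a - b * b * (α * α) ∈ K :=
        sub_mem (mul_mem ha ha) (mul_mem (mul_mem hb hb) h2)
      refine ⟨a / (a * a - b * b * (α * α)), div_mem ha hDm,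
        -b / (a * a - b * b * (α * α)), div_mem (neg_mem hb) hDm, ?_⟩
      have hone : (a + b * α) *
          (a / (a * a - b * b * (α * α)) + -b / (a * a - b * b * (α * α)) * α) = 1 := by
        rw [div_mul_eq_mul_div, ← add_div, mul_div_assoc', div_eq_one_iff_eq hD]
        ring
      exact inv_eq_of_mul_eq_one_right hone

/-- Key lemma: the square root of a squarefree number with a prime factor outside `S`
is not in `KS S`. -/
lemma key : ∀ S : Finset ℕ, (∀ p ∈ S, p.Prime) → ∀ n : ℕ, Squarefree n →
    (∃ r : ℕ, r.Prime ∧ r ∣ n ∧ r ∉ S) → Real.sqrt n ∉ KS S := by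
  classical
  intro S
  induction S using Finset.induction_on with
  | empty =>
    intro _ n hn ⟨r, hr, hrn, _⟩ hmem
    -- KS ∅ is the prime field; √n would be rational
    have hsub : KS (∅ : Finset ℕ) ≤ (Rat.castHom ℝ).fieldRange := by
      unfold KS
      rw [Subfield.closure_le]
      simp
    have hmem2 := hsub hmem
    obtain ⟨qq, hqq⟩ := RingHom.mem_fieldRange.mp hmem2
    have hirr : Irrational (Real.sqrt n) := by
      rw [irrational_sqrt_natCast_iff]
      intro ⟨k, hk⟩
      have : k * k ∣ n := ⟨1, by rw [hk]; ring⟩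
      have hku : IsUnit k := hn k this
      have hk1 : k = 1 := Nat.isUnit_iff.mp hku
      have hn1 : n = 1 := by rw [hk, hk1]
      have h2le := hr.two_le
      have := Nat.le_of_dvd Nat.one_pos (hn1 ▸ hrn)
      omega
    exact hirr ⟨qq, hqq⟩
  | insert a S₀ hxa ih =>
    intro hprime n hn ⟨r, hr, hrn, hrS⟩ hmem
    have haP : a.Prime := hprime a (mem_insert_self a S₀)
    have hprime₀ : ∀ p ∈ S₀, p.Prime := fun p hp => hprime p (mem_insert_of_mem hp)
    have hα : Real.sqrt a ∉ KS S₀ :=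
      ih hprime₀ a haP.squarefree ⟨a, haP, dvd_rfl, hxa⟩
    have h2 : Real.sqrt a * Real.sqrt a ∈ KS S₀ := by
      rw [Real.mul_self_sqrt (by positivity)]
      exact natCast_mem (KS S₀) a
    -- √n = x + y √a with x, y ∈ KS S₀
    have hsub : KS (insert a S₀) ≤ Subfield.closure (insert (Real.sqrt a) ((KS S₀ : Set ℝ))) := by
      unfold KS
      apply Subfield.closure_mono
      intro z hz
      obtain ⟨w, hw, rfl⟩ := hz
      rcases Finset.mem_insert.mp (by simpa using hw) with rfl | hw'
      · exact Set.mem_insert _ _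
      · exact Set.mem_insert_of_mem _ (Subfield.subset_closure ⟨w, by simpa using hw', rfl⟩)
    obtain ⟨x, hxm, y, hym, hxy⟩ := rep_adjoin (KS S₀) (Real.sqrt a) h2 hα (hsub hmem)
    have hsq : (x + y * Real.sqrt a) ^ 2 = (n : ℝ) := by
      rw [← hxy, Real.sq_sqrt (by positivity)]
    have ha2 : Real.sqrt a * Real.sqrt a = (a : ℝ) := Real.mul_self_sqrt (by positivity)
    have hexp : x ^ 2 + y ^ 2 * a + 2 * x * y * Real.sqrt a = (n : ℝ) := by
      linear_combination hsq - y ^ 2 * ha2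
    have hxy0 : x * y = 0 := by
      by_contra hne
      apply hα
      have h2xy : (2 : ℝ) * x * y ≠ 0 := by
        have h' : (2 : ℝ) * (x * y) ≠ 0 := mul_ne_zero two_ne_zero hne
        intro hc; exact h' (by linear_combination hc)
      have : Real.sqrt a = ((n : ℝ) - x ^ 2 - y ^ 2 * a) / (2 * x * y) := by
        rw [eq_div_iff h2xy]
        linear_combination hexp
      rw [this]
      exact div_mem (sub_mem (sub_mem (natCast_mem (KS S₀) n) (pow_mem hxm 2))
        (mul_mem (pow_mem hym 2) (natCast_mem (KS S₀) a)))
        (mul_mem (mul_mem (by exact_mod_cast natCast_mem (KS S₀) 2) hxm) hym)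
    rcases mul_eq_zero.mp hxy0 with hx0 | hy0
    · -- x = 0 : √n = y √a
      have hyeq : Real.sqrt n = y * Real.sqrt a := by rw [hxy, hx0, zero_add]
      by_cases hdvd : a ∣ n
      · -- n = a * m, √m = y ∈ KS S₀
        obtain ⟨m, rfl⟩ := hdvd
        have hm : Squarefree m := hn.squarefree_of_dvd ⟨a, mul_comm a m⟩
        have hsplit : Real.sqrt (a * m : ℕ) = Real.sqrt a * Real.sqrt m := by
          push_cast
          exact Real.sqrt_mul (by positivity) _
        have hapos : Real.sqrt a > 0 := Real.sqrt_pos.mpr (by exact_mod_cast haP.pos)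
        have hmeq : Real.sqrt m = y := by
          refine mul_left_cancel₀ hapos.ne' ?_
          rw [← hsplit, hyeq]; ring
        refine ih hprime₀ m hm ⟨r, hr, ?_, fun hc => hrS (mem_insert_of_mem hc)⟩ ?_
        · have hra : r ≠ a := fun hc => hrS (hc ▸ mem_insert_self a S₀)
          have : r ∣ a * m := hrn
          rcases (Nat.Prime.dvd_mul hr).mp this with h | h
          · exact absurd ((Nat.prime_dvd_prime_iff_eq hr haP).mp h) hra
          · exact h
        · rw [hmeq]; exact hym
      · -- a ∤ n : √(a*n) = y * a ∈ KS S₀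
        have hcop : Nat.Coprime a n := (Nat.Prime.coprime_iff_not_dvd haP).mpr hdvd
        have hsf : Squarefree (a * n) :=
          (Nat.squarefree_mul hcop).mpr ⟨haP.squarefree, hn⟩
        have hval : Real.sqrt ((a * n : ℕ) : ℝ) = y * a := by
          push_cast
          rw [Real.sqrt_mul (by positivity), hyeq,
            show Real.sqrt a * (y * Real.sqrt a) = y * (Real.sqrt a * Real.sqrt a) by ring, ha2]
        exact ih hprime₀ (a * n) hsf
          ⟨r, hr, Dvd.dvd.mul_left hrn a, fun hc => hrS (mem_insert_of_mem hc)⟩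
          (hval ▸ mul_mem hym (natCast_mem (KS S₀) a))
    · -- y = 0 : √n = x ∈ KS S₀
      have : Real.sqrt n = x := by rw [hxy, hy0, zero_mul, add_zero]
      exact ih hprime₀ n hn ⟨r, hr, hrn, fun hc => hrS (mem_insert_of_mem hc)⟩ (this ▸ hxm)

/-- Linear independence claim. -/
lemma indep : ∀ S : Finset ℕ, (∀ p ∈ S, p.Prime) → ∀ (D : Finset ℕ) (f : ℕ → ℚ),
    (∀ d ∈ D, Squarefree d ∧ ∀ r : ℕ, r.Prime → r ∣ d → r ∈ S) →
    ∑ d ∈ D, (f d : ℝ) * Real.sqrt d = 0 → ∀ d ∈ D, f d = 0 := by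
  classical
  intro S
  induction S using Finset.induction_on with
  | empty =>
    intro _ D f hcond hsum d hd
    have h1 : ∀ e ∈ D, e = 1 := by
      intro e he
      obtain ⟨hsf, hfac⟩ := hcond e he
      by_contra hne
      have he0 : e ≠ 0 := hsf.ne_zero
      obtain ⟨r, hr, hrd⟩ := Nat.exists_prime_and_dvd (by omega : e ≠ 1)
      exact absurd (hfac r hr hrd) (Finset.notMem_empty r)
    have hd1 := h1 d hd
    have hD1 : D = {1} := by
      rcases Finset.subset_singleton_iff.mp
        (fun e he => Finset.mem_singleton.mpr (h1 e he)) with h | h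
      · rw [h] at hd; simp at hd
      · exact h
    rw [hD1] at hsum
    simp at hsum
    rw [hd1]; exact_mod_cast hsum
  | insert a S₀ hxa ih =>
    intro hprime D f hcond hsum d hd
    have haP : a.Prime := hprime a (mem_insert_self a S₀)
    have hprime₀ : ∀ p ∈ S₀, p.Prime := fun p hp => hprime p (mem_insert_of_mem hp)
    have hα : Real.sqrt a ∉ KS S₀ :=
      key S₀ hprime₀ a haP.squarefree ⟨a, haP, dvd_rfl, hxa⟩
    set D₂ : Finset ℕ := D.filter (fun d => a ∣ d) with hD₂
    set D₁ : Finset ℕ := D.filter (fun d => ¬ a ∣ d) with hD₁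
    set A : ℝ := ∑ d ∈ D₁, (f d : ℝ) * Real.sqrt d with hAdef
    set B : ℝ := ∑ d ∈ D₂, (f d : ℝ) * Real.sqrt ((d / a : ℕ) : ℝ) with hBdef
    -- factor √a from the D₂ part
    have hd2eq : ∀ e ∈ D₂, e = a * (e / a) := by
      intro e he
      exact (Nat.mul_div_cancel' (Finset.mem_filter.mp he).2).symm
    have hD2sum : ∑ e ∈ D₂, (f e : ℝ) * Real.sqrt e = Real.sqrt a * B := by
      rw [hBdef, Finset.mul_sum]
      refine Finset.sum_congr rfl ?_
      intro e he
      have h1 : (e : ℝ) = (a : ℝ) * ((e / a : ℕ) : ℝ) := by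
        rw [← Nat.cast_mul, ← hd2eq e he]
      rw [h1, Real.sqrt_mul (by positivity)]
      ring
    have hsplit : A + Real.sqrt a * B = 0 := by
      rw [hAdef, ← hD2sum, ← hsum, hD₁, hD₂]
      rw [add_comm]
      exact Finset.sum_filter_add_sum_filter_not D _ _
    -- conditions for D₁ elements
    have hcond₁ : ∀ e ∈ D₁, Squarefree e ∧ ∀ r : ℕ, r.Prime → r ∣ e → r ∈ S₀ := by
      intro e he
      obtain ⟨heD, hnd⟩ := Finset.mem_filter.mp he
      obtain ⟨hsf, hfac⟩ := hcond e heD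
      refine ⟨hsf, fun r hrp hre => ?_⟩
      rcases Finset.mem_insert.mp (hfac r hrp hre) with rfl | h
      · exact absurd hre hnd
      · exact h
    -- conditions for D₂ quotients
    have hcond₂ : ∀ e ∈ D₂, Squarefree (e / a) ∧
        ∀ r : ℕ, r.Prime → r ∣ (e / a) → r ∈ S₀ := by
      intro e he
      obtain ⟨heD, hda⟩ := Finset.mem_filter.mp he
      obtain ⟨hsf, hfac⟩ := hcond e heD
      have hqd : e / a ∣ e := Nat.div_dvd_of_dvd hda
      refine ⟨hsf.squarefree_of_dvd hqd, fun r hrp hre => ?_⟩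
      rcases Finset.mem_insert.mp (hfac r hrp (hre.trans hqd)) with rfl | h
      · -- then r * r ∣ e, contradiction
        exfalso
        have : r * r ∣ e := by
          obtain ⟨c, hc⟩ := hre
          exact ⟨c, by rw [hd2eq e he, hc]; ring⟩
        exact hrp.not_isUnit (hsf r this)
      · exact h
    have hA : A ∈ KS S₀ := by
      rw [hAdef]
      refine sum_mem fun e he => ?_
      obtain ⟨hsf, hfac⟩ := hcond₁ e he
      exact mul_mem (SubfieldClass.ratCast_mem _ _) (sqrt_mem_KS hsf hfac)
    have hB : B ∈ KS S₀ := by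
      rw [hBdef]
      refine sum_mem fun e he => ?_
      obtain ⟨hsf, hfac⟩ := hcond₂ e he
      exact mul_mem (SubfieldClass.ratCast_mem _ _) (sqrt_mem_KS hsf hfac)
    have hB0 : B = 0 := by
      by_contra hBne
      apply hα
      have : Real.sqrt a = -A / B := by
        rw [eq_div_iff hBne]
        linear_combination hsplit
      rw [this]
      exact div_mem (neg_mem hA) hB
    have hA0 : A = 0 := by
      rw [hB0, mul_zero, add_zero] at hsplit
      exact hsplit
    -- apply IH to both parts
    have hres₁ : ∀ e ∈ D₁, f e = 0 := ih hprime₀ D₁ f hcond₁ (hAdef ▸ hA0)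
    have hinj₂ : ∀ x ∈ D₂, ∀ y ∈ D₂, x / a = y / a → x = y := by
      intro x hx y hy hxy
      rw [hd2eq x hx, hd2eq y hy, hxy]
    have hres₂ : ∀ e ∈ D₂.image (· / a), f (a * e) = 0 := by
      refine ih hprime₀ (D₂.image (· / a)) (fun e => f (a * e)) ?_ ?_
      · intro e he
        obtain ⟨x, hx, rfl⟩ := Finset.mem_image.mp he
        exact hcond₂ x hx
      · rw [Finset.sum_image hinj₂]
        rw [← hB0, hBdef]
        refine Finset.sum_congr rfl ?_
        intro e he
        show (f (a * (e / a)) : ℝ) * Real.sqrt ((e / a : ℕ) : ℝ) = _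
        rw [← hd2eq e he]
    by_cases hda : a ∣ d
    · have hdD₂ : d ∈ D₂ := Finset.mem_filter.mpr ⟨hd, hda⟩
      have := hres₂ (d / a) (Finset.mem_image.mpr ⟨d, hdD₂, rfl⟩)
      rwa [← hd2eq d hdD₂] at this
    · exact hres₁ d (Finset.mem_filter.mpr ⟨hd, hda⟩)

/-- Square roots of distinct square-free integers greater than 1 are linearly
independent over the rationals. -/
theorem stmt12 (n : ℕ) (p : Fin n → ℕ) (hinj : Function.Injective p)
    (hsf : ∀ i, Squarefree (p i)) (hgt : ∀ i, 1 < p i)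
    (q : Fin n → ℚ) (h : ∑ i, (q i : ℝ) * Real.sqrt (p i) = 0) :
    ∀ i, q i = 0 := by
  classical
  set S : Finset ℕ := Finset.univ.biUnion (fun i => (p i).primeFactors) with hS
  have hprime : ∀ r ∈ S, r.Prime := by
    intro r hr
    obtain ⟨i, _, hi⟩ := Finset.mem_biUnion.mp hr
    exact Nat.prime_of_mem_primeFactors hi
  set D : Finset ℕ := Finset.univ.image p with hD
  set f : ℕ → ℚ := fun d => if h : ∃ i, p i = d then q h.choose else 0 with hf
  have hfp : ∀ i, f (p i) = q i := by
    intro i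
    have hex : ∃ j, p j = p i := ⟨i, rfl⟩
    rw [hf]
    simp only [dif_pos hex]
    exact congrArg q (hinj hex.choose_spec)
  have hsum : ∑ d ∈ D, (f d : ℝ) * Real.sqrt d = 0 := by
    rw [hD, Finset.sum_image (fun x _ y _ hxy => hinj hxy)]
    simp_rw [hfp]
    exact h
  have hcond : ∀ d ∈ D, Squarefree d ∧ ∀ r : ℕ, r.Prime → r ∣ d → r ∈ S := by
    intro d hd
    obtain ⟨i, _, rfl⟩ := Finset.mem_image.mp hd
    refine ⟨hsf i, fun r hr hrd => ?_⟩
    exact Finset.mem_biUnion.mpr ⟨i, Finset.mem_univ i,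
      Nat.mem_primeFactors.mpr ⟨hr, hrd, by have := hgt i; omega⟩⟩
  intro i
  have := indep S hprime D f hcond hsum (p i) (Finset.mem_image.mpr ⟨i, Finset.mem_univ i, rfl⟩)
  rwa [hfp i] at this
end

section
/- Let X = (X₁,...,X_p) be a jointly continuous random vector in ℝᵖ and let a₁,...,a_R ∈ ℂ be such that the set S' = {|a_d|² : 1 ≤ d ≤ R} ∪ {a_k^H a_ℓ + a_k a_ℓ^H : 1 ≤ k < ℓ ≤ R} (a set of real numbers) is rationally independent. Then with probability 1, the set L = {Xᵢ²|a_k|² : i ∈ [p], k ∈ [R]} ∪ {XᵢXⱼ|a_k|² : 1 ≤ i < j ≤ p, k ∈ [R]} ∪ {XᵢXⱼ(a_k^H a_ℓ + a_k a_ℓ^H) : 1 ≤ i < j ≤ p, 1 ≤ k < ℓ ≤ R} is rationally independent. -/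
open MeasureTheory MvPolynomial

lemma measurable_mveval {n : ℕ} (P : MvPolynomial (Fin n) ℝ) :
    Measurable fun x : Fin n → ℝ => eval x P :=
  (MvPolynomial.continuous_eval P).measurable

lemma mvpoly_null : ∀ (n : ℕ) (P : MvPolynomial (Fin n) ℝ), P ≠ 0 →
    (volume : Measure (Fin n → ℝ)) {x | eval x P = 0} = 0 := by
  intro n
  induction n with
  | zero =>
    intro P hP
    have h0 : {x : Fin 0 → ℝ | eval x P = 0} = ∅ := by
      ext x
      simp only [Set.mem_setOf_eq, Set.mem_empty_iff_false, iff_false]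
      rw [eq_C_of_isEmpty P, eval_C]
      intro h
      exact hP (by rw [eq_C_of_isEmpty P, h, map_zero])
    rw [h0]; exact measure_empty
  | succ n ih =>
    intro P hP
    -- F : univariate polynomial over MvPolynomial (Fin n) ℝ
    set F := finSuccEquiv ℝ n P with hF
    have hF0 : F ≠ 0 := by
      simp only [hF, Ne, EmbeddingLike.map_eq_zero_iff]; exact hP
    -- bad set in product space
    set T : Set (ℝ × (Fin n → ℝ)) :=
      {q | Polynomial.eval q.1 (Polynomial.map (eval q.2) F) = 0} with hT
    have hTmeas : MeasurableSet T := by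
      have : ∀ q : ℝ × (Fin n → ℝ), Polynomial.eval q.1 (Polynomial.map (eval q.2) F)
          = ∑ i ∈ Finset.range (F.natDegree + 1), eval q.2 (F.coeff i) * q.1 ^ i := by
        intro q
        rw [Polynomial.eval_map, Polynomial.eval₂_eq_sum_range]
      have hmeas : Measurable fun q : ℝ × (Fin n → ℝ) =>
          ∑ i ∈ Finset.range (F.natDegree + 1), eval q.2 (F.coeff i) * q.1 ^ i := by
        apply Finset.measurable_sum
        intro i _
        exact ((measurable_mveval (F.coeff i)).comp measurable_snd).mul
          (measurable_fst.pow_const i)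
      have : T = {q | ∑ i ∈ Finset.range (F.natDegree + 1),
          eval q.2 (F.coeff i) * q.1 ^ i = 0} := by
        ext q; simp [hT, this q]
      rw [this]
      exact hmeas (measurableSet_singleton 0)
    -- T is null
    have hTnull : ((volume : Measure ℝ).prod (volume : Measure (Fin n → ℝ))) T = 0 := by
      have hswap : ((volume : Measure ℝ).prod (volume : Measure (Fin n → ℝ))) T
          = ((volume : Measure (Fin n → ℝ)).prod (volume : Measure ℝ)) (Prod.swap ⁻¹' T) := by
        rw [← Measure.prod_swap, Measure.map_apply measurable_swap hTmeas]
      rw [hswap, Measure.measure_prod_null (measurable_swap hTmeas)]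
      -- for a.e. y, the slice is null
      obtain ⟨k, hk⟩ : ∃ k, F.coeff k ≠ 0 := by
        by_contra h
        push_neg at h
        exact hF0 (Polynomial.ext fun k => by simp [h k])
      have hae : ∀ᵐ y : (Fin n → ℝ) ∂volume, eval y (F.coeff k) ≠ 0 := by
        have := ih (F.coeff k) hk
        rw [ae_iff]
        convert this using 2
        ext y; simp
      filter_upwards [hae] with y hy
      have hQ : Polynomial.map (eval y) F ≠ 0 := by
        intro h
        apply hy
        have := congrArg (fun q => Polynomial.coeff q k) h
        simpa using this
      have hfin : Set.Finite {t : ℝ | Polynomial.eval t (Polynomial.map (eval y) F) = 0} :=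
        Polynomial.finite_setOf_isRoot hQ
      have : Prod.mk y ⁻¹' (Prod.swap ⁻¹' T) = {t : ℝ | Polynomial.eval t (Polynomial.map (eval y) F) = 0} := by
        ext t; simp [hT]
      simp only [this]
      exact hfin.measure_zero _
    -- transfer back along the measurable equiv
    have e := MeasurableEquiv.piFinSuccAbove (fun _ : Fin (n+1) => ℝ) 0
    have hmp := volume_preserving_piFinSuccAbove (fun _ : Fin (n+1) => ℝ) 0
    have hpre : {x : Fin (n+1) → ℝ | eval x P = 0}
        = (MeasurableEquiv.piFinSuccAbove (fun _ : Fin (n+1) => ℝ) 0) ⁻¹' T := by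
      ext x
      simp only [Set.mem_setOf_eq, Set.mem_preimage, hT]
      have hx : x = Fin.cons (x 0) (Fin.tail x) := (Fin.cons_self_tail x).symm
      have h2 : (MeasurableEquiv.piFinSuccAbove (fun _ : Fin (n+1) => ℝ) 0 x).2
          = Fin.tail x := by
        funext j
        simp [MeasurableEquiv.piFinSuccAbove, Fin.tail, Fin.succAbove_zero]
      have h1 : (MeasurableEquiv.piFinSuccAbove (fun _ : Fin (n+1) => ℝ) 0 x).1 = x 0 := by
        simp [MeasurableEquiv.piFinSuccAbove]
      rw [h1, h2]
      conv_lhs => rw [hx]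
      rw [eval_eq_eval_mv_eval']
    rw [hpre, hmp.measure_preimage hTmeas.nullMeasurableSet]
    convert hTnull
    exact Measure.volume_eq_prod _ _


lemma quad_null (p : ℕ) (c : Fin p → ℝ) (d : Fin p → Fin p → ℝ)
    (h : (∃ i, c i ≠ 0) ∨ (∃ i j, i < j ∧ d i j ≠ 0)) :
    (volume : Measure (Fin p → ℝ))
      {x | (∑ i, c i * x i ^ 2)
        + (∑ i, ∑ j, if i < j then d i j * (x i * x j) else 0) = 0} = 0 := by
  set P : MvPolynomial (Fin p) ℝ :=
    (∑ i, MvPolynomial.C (c i) * MvPolynomial.X i ^ 2)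
      + ∑ i, ∑ j, if i < j then MvPolynomial.C (d i j) * (MvPolynomial.X i * MvPolynomial.X j)
          else 0 with hPdef
  have heval : ∀ x : Fin p → ℝ, eval x P
      = (∑ i, c i * x i ^ 2)
        + (∑ i, ∑ j, if i < j then d i j * (x i * x j) else 0) := by
    intro x
    simp [hPdef, apply_ite (eval x)]
  have hP : P ≠ 0 := by
    intro h0
    have hQ0 : ∀ x : Fin p → ℝ, (∑ i, c i * x i ^ 2)
        + (∑ i, ∑ j, if i < j then d i j * (x i * x j) else 0) = 0 := by
      intro x; rw [← heval x, h0, map_zero]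
    have hc0 : ∀ i, c i = 0 := by
      intro i
      have hx := hQ0 (Pi.single i 1)
      have h1 : (∑ i', c i' * (Pi.single i 1 : Fin p → ℝ) i' ^ 2) = c i := by
        rw [Finset.sum_eq_single i]
        · simp
        · intro i' _ hne; rw [Pi.single_eq_of_ne hne]; ring
        · simp
      have h2 : (∑ i', ∑ j', if i' < j' then
          d i' j' * ((Pi.single i 1 : Fin p → ℝ) i' * (Pi.single i 1 : Fin p → ℝ) j') else 0)
          = 0 := by
        apply Finset.sum_eq_zero; intro i' _
        apply Finset.sum_eq_zero; intro j' _
        by_cases hij : i' < j'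
        · have hprod : (Pi.single i 1 : Fin p → ℝ) i' * (Pi.single i 1 : Fin p → ℝ) j' = 0 := by
            rcases eq_or_ne i' i with rfl | hne
            · rw [Pi.single_eq_of_ne (by omega : j' ≠ i')]; ring
            · rw [Pi.single_eq_of_ne hne]; ring
          simp [hij, hprod]
        · simp [hij]
      rw [h1, h2] at hx
      linarith
    have hd0 : ∀ i j, i < j → d i j = 0 := by
      intro i j hij
      set x : Fin p → ℝ := fun t => if t = i ∨ t = j then 1 else 0 with hxdef
      have hx := hQ0 x
      have h1 : (∑ i', c i' * x i' ^ 2) = 0 := by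
        apply Finset.sum_eq_zero; intro i' _; rw [hc0 i']; ring
      have h2 : (∑ i', ∑ j', if i' < j' then d i' j' * (x i' * x j') else 0) = d i j := by
        rw [Finset.sum_eq_single i]
        · rw [Finset.sum_eq_single j]
          · have hxi : x i = 1 := by simp [hxdef]
            have hxj : x j = 1 := by simp [hxdef]
            simp [hij, hxi, hxj]
          · intro j' _ hne
            by_cases hlt : i < j'
            · have : x j' = 0 := by
                simp only [hxdef]
                rw [if_neg]
                rintro (rfl | rfl)
                · exact lt_irrefl _ hlt
                · exact hne rfl
              simp [hlt, this]
            · simp [hlt]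
          · simp
        · intro i' _ hne
          apply Finset.sum_eq_zero; intro j' _
          by_cases hlt : i' < j'
          · have hprod : x i' * x j' = 0 := by
              rcases eq_or_ne i' j with rfl | hne2
              · have : x j' = 0 := by
                  simp only [hxdef]
                  rw [if_neg]
                  rintro (rfl | rfl)
                  · exact absurd (hij.trans hlt) (lt_irrefl _)
                  · exact lt_irrefl _ hlt
                rw [this]; ring
              · have : x i' = 0 := by
                  simp only [hxdef]
                  rw [if_neg]
                  rintro (rfl | rfl)
                  · exact hne rfl
                  · exact hne2 rfl
                rw [this]; ring
            simp [hlt, hprod]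
          · simp [hlt]
        · simp
      rw [h1, h2] at hx
      linarith
    rcases h with ⟨i, hi⟩ | ⟨i, j, hij, hd⟩
    · exact hi (hc0 i)
    · exact hd (hd0 i j hij)
  have := mvpoly_null p P hP
  convert this using 2
  ext x
  simp [heval x]


/-- If X is jointly continuous in ℝᵖ and the real numbers
S' = {|a_d|²} ∪ {a_k^H a_ℓ + a_k a_ℓ^H : k < ℓ} are rationally independent, then almost
surely the set L = {Xᵢ²|a_k|²} ∪ {XᵢXⱼ|a_k|² : i<j} ∪ {XᵢXⱼ(a_k^H a_ℓ + a_k a_ℓ^H) : i<j, k<ℓ}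
is rationally independent. -/
theorem stmt18 {Ω : Type*} [MeasurableSpace Ω] (μ : Measure Ω) [IsProbabilityMeasure μ]
    (p R : ℕ) (X : Ω → (Fin p → ℝ)) (hX : Measurable X)
    (f : (Fin p → ℝ) → ENNReal) (hf : Measurable f)
    (hdens : μ.map X = (volume : Measure (Fin p → ℝ)).withDensity f)
    (a : Fin R → ℂ)
    (hS' : ∀ (q : Fin R → ℚ) (r : Fin R → Fin R → ℚ),
      (∑ d, (q d : ℝ) * Complex.normSq (a d))
        + (∑ k, ∑ l, if k < l then
            (r k l : ℝ) * ((starRingEnd ℂ) (a k) * a l + a k * (starRingEnd ℂ) (a l)).re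
          else 0) = 0 →
      (∀ d, q d = 0) ∧ (∀ k l, k < l → r k l = 0)) :
    ∀ᵐ ω ∂μ, ∀ (A : Fin p → Fin R → ℚ) (B : Fin p → Fin p → Fin R → ℚ)
        (C : Fin p → Fin p → Fin R → Fin R → ℚ),
      (∑ i, ∑ k, (A i k : ℝ) * ((X ω i) ^ 2 * Complex.normSq (a k)))
        + (∑ i, ∑ j, ∑ k, if i < j then
            (B i j k : ℝ) * (X ω i * X ω j * Complex.normSq (a k)) else 0)
        + (∑ i, ∑ j, ∑ k, ∑ l, if i < j ∧ k < l then
            (C i j k l : ℝ) * (X ω i * X ω j *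
              ((starRingEnd ℂ) (a k) * a l + a k * (starRingEnd ℂ) (a l)).re) else 0) = 0 →
      (∀ i k, A i k = 0) ∧ (∀ i j k, i < j → B i j k = 0) ∧
        (∀ i j k l, i < j → k < l → C i j k l = 0) := by
  rw [MeasureTheory.ae_all_iff]
  intro A
  rw [MeasureTheory.ae_all_iff]
  intro B
  rw [MeasureTheory.ae_all_iff]
  intro C
  set nsq : Fin R → ℝ := fun k => Complex.normSq (a k) with hnsq
  set s : Fin R → Fin R → ℝ := fun k l =>
    ((starRingEnd ℂ) (a k) * a l + a k * (starRingEnd ℂ) (a l)).re with hs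
  set c : Fin p → ℝ := fun i => ∑ k, (A i k : ℝ) * nsq k with hc
  set d : Fin p → Fin p → ℝ := fun i j =>
    (∑ k, (B i j k : ℝ) * nsq k) + ∑ k, ∑ l, if k < l then (C i j k l : ℝ) * s k l else 0
    with hd
  -- algebraic identity
  have halg : ∀ x : Fin p → ℝ,
      (∑ i, ∑ k, (A i k : ℝ) * (x i ^ 2 * nsq k))
        + (∑ i, ∑ j, ∑ k, if i < j then (B i j k : ℝ) * (x i * x j * nsq k) else 0)
        + (∑ i, ∑ j, ∑ k, ∑ l, if i < j ∧ k < l then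
            (C i j k l : ℝ) * (x i * x j * s k l) else 0)
      = (∑ i, c i * x i ^ 2)
        + (∑ i, ∑ j, if i < j then d i j * (x i * x j) else 0) := by
    intro x
    have e1 : (∑ i, ∑ k, (A i k : ℝ) * (x i ^ 2 * nsq k)) = ∑ i, c i * x i ^ 2 := by
      refine Finset.sum_congr rfl fun i _ => ?_
      rw [hc, Finset.sum_mul]
      exact Finset.sum_congr rfl fun k _ => by ring
    have e2 : (∑ i, ∑ j, ∑ k, if i < j then (B i j k : ℝ) * (x i * x j * nsq k) else 0)
        + (∑ i, ∑ j, ∑ k, ∑ l, if i < j ∧ k < l then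
            (C i j k l : ℝ) * (x i * x j * s k l) else 0)
        = ∑ i, ∑ j, if i < j then d i j * (x i * x j) else 0 := by
      rw [← Finset.sum_add_distrib]
      refine Finset.sum_congr rfl fun i _ => ?_
      rw [← Finset.sum_add_distrib]
      refine Finset.sum_congr rfl fun j _ => ?_
      by_cases hij : i < j
      · simp only [hij, if_true, true_and]
        rw [hd]
        rw [add_mul, Finset.sum_mul, Finset.sum_mul]
        congr 1
        · exact Finset.sum_congr rfl fun k _ => by ring
        · refine Finset.sum_congr rfl fun k _ => ?_
          rw [Finset.sum_mul]
          refine Finset.sum_congr rfl fun l _ => ?_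
          rw [ite_mul, zero_mul]
          by_cases hkl : k < l
          · simp only [hkl, if_true]; ring
          · simp [hkl]
      · simp [hij]
    rw [← e1, ← e2]; ring
  by_cases hconcl : (∀ i k, A i k = 0) ∧ (∀ i j k, i < j → B i j k = 0) ∧
      (∀ i j k l, i < j → k < l → C i j k l = 0)
  · filter_upwards with ω _
    exact hconcl
  · -- some coefficient of the quadratic form is nonzero
    have hcd : (∃ i, c i ≠ 0) ∨ (∃ i j, i < j ∧ d i j ≠ 0) := by
      by_contra hno
      push_neg at hno
      obtain ⟨h1, h2⟩ := hno
      apply hconcl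
      refine ⟨fun i k => ?_, fun i j k hij => ?_, fun i j k l hij hkl => ?_⟩
      · have h0 := hS' (A i) 0 (by
          have hci := h1 i
          rw [hc] at hci
          simp only [hnsq] at hci
          simpa using hci)
        exact h0.1 k
      · have h0 := hS' (fun k => B i j k) (fun k l => C i j k l) (by
          have hdij := h2 i j hij
          rw [hd] at hdij
          simp only [hnsq, hs] at hdij
          exact hdij)
        exact h0.1 k
      · have h0 := hS' (fun k => B i j k) (fun k l => C i j k l) (by
          have hdij := h2 i j hij
          rw [hd] at hdij
          simp only [hnsq, hs] at hdij
          exact hdij)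
        exact h0.2 k l hkl
    -- the zero set of the quadratic form
    set S : Set (Fin p → ℝ) := {x | (∑ i, c i * x i ^ 2)
        + (∑ i, ∑ j, if i < j then d i j * (x i * x j) else 0) = 0} with hS2
    have hSmeas : MeasurableSet S := by
      have hm : Measurable fun x : Fin p → ℝ => (∑ i, c i * x i ^ 2)
          + (∑ i, ∑ j, if i < j then d i j * (x i * x j) else 0) := by
        apply Measurable.add
        · exact Finset.measurable_sum _ fun i _ =>
            measurable_const.mul ((measurable_pi_apply i).pow_const 2)
        · refine Finset.measurable_sum _ fun i _ => Finset.measurable_sum _ fun j _ => ?_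
          by_cases hij : i < j
          · simp only [hij, if_true]
            exact measurable_const.mul ((measurable_pi_apply i).mul (measurable_pi_apply j))
          · simp only [hij, if_false]
            exact measurable_const
      exact hm (measurableSet_singleton 0)
    have hSnull : (volume : Measure (Fin p → ℝ)) S = 0 := quad_null p c d hcd
    have hmapnull : μ.map X S = 0 := by
      rw [hdens]
      exact (withDensity_absolutelyContinuous volume f) hSnull
    have hprenull : μ (X ⁻¹' S) = 0 := by
      rw [← Measure.map_apply hX hSmeas]
      exact hmapnull
    have hae : ∀ᵐ ω ∂μ, X ω ∉ S := by
      rw [ae_iff]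
      simpa using (show μ {a | X a ∈ S} = 0 from hprenull)
    filter_upwards [hae] with ω hω heq
    exfalso
    apply hω
    rw [hS2, Set.mem_setOf_eq, ← halg (X ω)]
    exact heq
end
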